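/- Let ξ be a real random variable such that for some τ_1 ≥ 0 and τ_2 ≥ 0 and for all t ≥ 1, with probability at least 1 − e^{−t}, |ξ| ≤ τ_1√t ∨ τ_2 t. Let ℓ satisfy Assumption 3.1 with constants c_1, c_2. If 2c_2τ_2 < 1, then 𝔼ℓ²(ξ) ≤ 2e√(2π) c_1² e^{2c_2²τ_1²} + e c_1²/(1 − 2c_2τ_2). -/

import Mathlib

open MeasureTheory ProbabilityTheory Filter Set
open scoped RealInnerProductSpace Topology NNReal ENNReal

noncomputable section

namespace KLN

variable {H : Type*} [NormedAddCommGroup H] [InnerProductSpace ℝ H] [CompleteSpace H]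

/-- Rank-one operator `x ⊗ y : w ↦ ⟪y, w⟫ • x`. -/
def outer (x y : H) : H →L[ℝ] H := (innerSL ℝ y).smulRight x

/-- Sample covariance of the sample `X`. -/
def sampleCov {n : ℕ} (X : Fin n → H) : H →L[ℝ] H :=
  (n : ℝ)⁻¹ • ∑ j : Fin n, outer (X j) (X j)

/-- Courant–Fischer: `lam A j` is the `(j+1)`-th largest eigenvalue of the
positive self-adjoint compact operator `A` (eigenvalues repeated with multiplicity). -/
def lam (A : H →L[ℝ] H) (j : ℕ) : ℝ :=
  ⨆ V : {V : Submodule ℝ H // Module.finrank ℝ V = j + 1},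
    ⨅ x : {x : H // x ∈ V.1 ∧ ‖x‖ = 1}, ⟪A x.1, x.1⟫

/-- `λ_δ(A) := max {λ ∈ A : (λ-δ, λ) ∩ A = ∅}`. -/
def lamDelta (δ : ℝ) (A : Set ℝ) : ℝ := sSup {l | l ∈ A ∧ Ioo (l - δ) l ∩ A = ∅}

/-- Top δ-cluster `T_δ(A) := A \ [0, λ_δ(A))`. -/
def topCluster (δ : ℝ) (A : Set ℝ) : Set ℝ := A \ Ico 0 (lamDelta δ A)

/-- Successive residual sets after removing top clusters. -/
def resid (δ : ℝ) (A : Set ℝ) : ℕ → Set ℝ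
  | 0 => A
  | k + 1 => resid δ A k \ topCluster δ (resid δ A k)

/-- `cluster δ A k` is the `(k+1)`-th δ-cluster `A_{k+1}` of `A`. -/
def cluster (δ : ℝ) (A : Set ℝ) (k : ℕ) : Set ℝ := topCluster δ (resid δ A k)

/-- The number of δ-clusters: `ν := min {j : A_{j+1} = ∅}`. -/
def nClusters (δ : ℝ) (A : Set ℝ) : ℕ := sInf {j | cluster δ A j = ∅}

/-- `σ(A) ∪ {0}`. -/
def spec0 (A : H →L[ℝ] H) : Set ℝ := spectrum ℝ A ∪ {0}

/-- Direct sum of the eigenspaces of `A` for eigenvalues in `c`. -/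
def clusterSpace (A : H →L[ℝ] H) (c : Set ℝ) : Submodule ℝ H :=
  ⨆ t ∈ c, Module.End.eigenspace (A : H →ₗ[ℝ] H) t

/-- `A` is self-adjoint, positive and nuclear (trace class). -/
def IsPosNuclear (A : H →L[ℝ] H) : Prop :=
  (∀ x y : H, ⟪A x, y⟫ = ⟪x, A y⟫) ∧ (∀ x : H, 0 ≤ ⟪A x, x⟫) ∧
    ∃ (ι : Type) (e : HilbertBasis ι ℝ H), Summable fun i => ⟪A (e i), e i⟫

/-- Nuclear norm of a self-adjoint `A`: `‖A‖₁ = ∑_j √(λ_j(A∘A))`. -/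
def nuclearNormSA (A : H →L[ℝ] H) : ℝ := ∑' j, Real.sqrt (lam (A.comp A) j)

/-- A covariance operator together with its spectral decomposition
`Σ = ∑_s μ_s P_s` where `μ 0 > μ 1 > ⋯ > 0` are the distinct eigenvalues (0-indexed;
zero projections `P s = 0` are allowed so that finite rank operators are covered)
and `P s` are the (finite rank, mutually orthogonal) spectral projections. -/
structure CovOp (H : Type*) [NormedAddCommGroup H] [InnerProductSpace ℝ H]
    [CompleteSpace H] where
  toCLM : H →L[ℝ] H
  μ : ℕ → ℝ
  P : ℕ → H →L[ℝ] H
  μ_pos : ∀ s, 0 < μ s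
  μ_anti : StrictAnti μ
  μ_lim : Tendsto μ atTop (nhds 0)
  P_symm : ∀ s (x y : H), ⟪P s x, y⟫ = ⟪x, P s y⟫
  P_idem : ∀ s (x : H), P s (P s x) = P s x
  P_orth : ∀ s t, s ≠ t → ∀ x : H, P s (P t x) = 0
  P_finrank : ∀ s, FiniteDimensional ℝ (LinearMap.range (P s).toLinearMap)
  μm_summable : Summable fun s =>
    μ s * (Module.finrank ℝ (LinearMap.range (P s).toLinearMap) : ℝ)
  decomp : ∀ x : H, HasSum (fun s => μ s • P s x) (toCLM x)

namespace CovOp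

/-- multiplicity `m_s` of `μ s`. -/
def m (S : CovOp H) (s : ℕ) : ℕ :=
  Module.finrank ℝ (LinearMap.range (S.P s).toLinearMap)

/-- `tr(Σ) = ∑_s μ_s m_s`. -/
def trace (S : CovOp H) : ℝ := ∑' s, S.μ s * (S.m s : ℝ)

/-- effective rank `r(Σ) = tr(Σ)/‖Σ‖`. -/
def effRank (S : CovOp H) : ℝ := S.trace / ‖S.toCLM‖

/-- spectral gap `g_r = dist(μ_r, σ(Σ) \ {μ_r})`. -/
def g (S : CovOp H) (r : ℕ) : ℝ :=
  Metric.infDist (S.μ r) (spectrum ℝ S.toCLM \ {S.μ r})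

/-- `ḡ_r = min_{s ≤ r} g_s`. -/
def gbar (S : CovOp H) (r : ℕ) : ℝ := ⨅ s : Fin (r + 1), S.g s

/-- `C_r x = ∑_{s ≠ r} (μ_r - μ_s)⁻¹ P_s x`. -/
def C (S : CovOp H) (r : ℕ) (x : H) : H :=
  ∑' s, (if s = r then 0 else (S.μ r - S.μ s)⁻¹) • S.P s x

/-- `σ_r²(Σ; u) = μ_r ⟨Σ C_r u, C_r u⟩`. -/
def sigmaSq (S : CovOp H) (r : ℕ) (u : H) : ℝ :=
  S.μ r * ⟪S.toCLM (S.C r u), S.C r u⟫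

/-- `Δ_r = {j : λ_j(Σ) = μ_r}` (eigenvalues `λ_j` with multiplicities, 0-indexed). -/
def Delta (S : CovOp H) (r : ℕ) : Set ℕ := {j | lam S.toCLM j = S.μ r}

/-- `μ r` is a simple eigenvalue with (unit) eigenvector `θ`, i.e. `P r = θ ⊗ θ`. -/
def SimpleVec (S : CovOp H) (r : ℕ) (θ : H) : Prop :=
  ‖θ‖ = 1 ∧ ∀ x : H, S.P r x = ⟪θ, x⟫ • θ

/-- `L_r(E) x = P_r E C_r x + C_r E P_r x`, with `P_r = θ ⊗ θ`. -/
def L (S : CovOp H) (r : ℕ) (θ : H) (E : H →L[ℝ] H) (x : H) : H :=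
  ⟪θ, E (S.C r x)⟫ • θ + S.C r (E (⟪θ, x⟫ • θ))

/-- the class `𝒮^{(r)}(rk, a, s0, u)`. -/
def memS (S : CovOp H) (r : ℕ) (u : H) (rk a s0 : ℝ) : Prop :=
  S.effRank ≤ rk ∧ ‖S.toCLM‖ / S.gbar r ≤ a ∧ s0 ^ 2 ≤ S.sigmaSq r u

/-- the open class `𝒮̊^{(r)}(rk, a, s0, u)`. -/
def memSo (S : CovOp H) (r : ℕ) (u : H) (rk a s0 : ℝ) : Prop :=
  S.effRank < rk ∧ ‖S.toCLM‖ / S.gbar r < a ∧ s0 ^ 2 < S.sigmaSq r u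

/-- `A_r(Σ) = 2 ∑_{s ≠ r} μ_r μ_s m_s / (μ_r - μ_s)²`. -/
def Ar (S : CovOp H) (r : ℕ) : ℝ :=
  2 * ∑' s, (if s = r then 0 else S.μ r * S.μ s * (S.m s : ℝ) / (S.μ r - S.μ s) ^ 2)

end CovOp

/-- `ν` is a centered Gaussian measure on `H` with covariance operator `A`. -/
def IsGaussian [MeasurableSpace H] (ν : Measure H) (A : H →L[ℝ] H) : Prop :=
  IsProbabilityMeasure ν ∧
    ∀ u : H, ν.map (fun x => ⟪x, u⟫) = gaussianReal 0 (Real.toNNReal ⟪A u, u⟫)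

/-- standard normal distribution function. -/
def Phi (x : ℝ) : ℝ := ((gaussianReal 0 1) (Iic x)).toReal

/-- `E ℓ(Z)`, `Z` standard normal. -/
def stdGaussExp (f : ℝ → ℝ) : ℝ := ∫ z, f z ∂(gaussianReal 0 1)

/-- Assumption 3.1 on the loss function. -/
structure IsLoss (f : ℝ → ℝ) (c₁ c₂ : ℝ) : Prop where
  c₁_pos : 0 < c₁
  c₂_pos : 0 < c₂
  nonneg : ∀ x, 0 ≤ f x
  zero : f 0 = 0
  even : ∀ x, f (-x) = f x
  mono : MonotoneOn f (Ici 0)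
  conv : ConvexOn ℝ (Ici 0) f
  bound : ∀ x, 0 ≤ x → f x ≤ c₁ * Real.exp (c₂ * x)

/-- the bias parameter `b_r = E⟨θ̂_r, θ_r⟩² - 1` for an estimator `est` based on a
sample of `k` i.i.d. observations from `ν`. -/
def biasParam [MeasurableSpace H] {k : ℕ} (ν : Measure H) (θ : H)
    (est : (Fin k → H) → H) : ℝ :=
  (∫ x, ⟪est x, θ⟫ ^ 2 ∂(Measure.pi fun _ : Fin k => ν)) - 1

/-- `est` is a valid selection of the estimator `θ̂_r^δ` with `δ = τ‖Σ̂‖`: a unit vector,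
aligned with `θ`, lying in the direct sum of eigenspaces of `Σ̂` for eigenvalues in the
`r`-th `δ`-cluster of `σ(Σ̂)` (whenever that space is nontrivial). -/
def clusterSel (r : ℕ) (θ : H) (τ : ℝ) {k : ℕ} (est : (Fin k → H) → H) : Prop :=
  ∀ x : Fin k → H,
    ‖est x‖ = 1 ∧ 0 ≤ ⟪est x, θ⟫ ∧
      (clusterSpace (sampleCov x) (cluster (τ * ‖sampleCov x‖) (spec0 (sampleCov x)) r) ≠ ⊥ →
        est x ∈ clusterSpace (sampleCov x) (cluster (τ * ‖sampleCov x‖) (spec0 (sampleCov x)) r))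

/-- `est` is a valid selection of the empirical eigenvector `θ̂_r`: a unit vector, aligned
with `θ`, which is an eigenvector of `Σ̂` for an eigenvalue `λ_j(Σ̂)` with `j ∈ Δ_r`
(whenever such an eigenvector exists). -/
def eigSel (S : CovOp H) (r : ℕ) (θ : H) {k : ℕ} (est : (Fin k → H) → H) : Prop :=
  ∀ x : Fin k → H,
    ‖est x‖ = 1 ∧ 0 ≤ ⟪est x, θ⟫ ∧
      ((∃ v : H, ‖v‖ = 1 ∧ ∃ j ∈ S.Delta r, sampleCov x v = lam (sampleCov x) j • v) →
        ∃ j ∈ S.Delta r, sampleCov x (est x) = lam (sampleCov x) j • est x)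


private lemma psi_hasDerivAt (b a t : ℝ) (ht : 0 < t) :
    HasDerivAt (fun s => Real.exp (b * Real.sqrt s) + Real.exp (a * s))
      (b / (2 * Real.sqrt t) * Real.exp (b * Real.sqrt t) + a * Real.exp (a * t)) t := by
  have h1 : HasDerivAt Real.sqrt (1 / (2 * Real.sqrt t)) t := Real.hasDerivAt_sqrt ht.ne'
  have h2 : HasDerivAt (fun s => b * Real.sqrt s) (b * (1 / (2 * Real.sqrt t))) t :=
    h1.const_mul b
  have h4 : HasDerivAt (fun s : ℝ => a * s) a t := by
    simpa using (hasDerivAt_id t).const_mul a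
  exact (h2.exp.add h4.exp).congr_deriv (by ring)

private lemma psid_nonneg (b a t : ℝ) (hb : 0 ≤ b) (ha : 0 ≤ a) :
    0 ≤ b / (2 * Real.sqrt t) * Real.exp (b * Real.sqrt t) + a * Real.exp (a * t) :=
  add_nonneg
    (mul_nonneg (div_nonneg hb (by positivity)) (Real.exp_pos _).le)
    (mul_nonneg ha (Real.exp_pos _).le)

private lemma psid_mul_exp_le (b a t : ℝ) (hb : 0 ≤ b) (ha : 0 ≤ a) (ht : 1 < t) :
    (b / (2 * Real.sqrt t) * Real.exp (b * Real.sqrt t) + a * Real.exp (a * t)) * Real.exp (-t)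
      ≤ b / 2 * Real.exp (b ^ 2 / 3) * Real.exp (-(1/4) * t) + a * Real.exp (-(1 - a) * t) := by
  have ht0 : (0:ℝ) ≤ t := by linarith
  have hst : (1:ℝ) ≤ Real.sqrt t := by
    have h := Real.sqrt_le_sqrt ht.le
    rwa [Real.sqrt_one] at h
  have hsq : Real.sqrt t ^ 2 = t := Real.sq_sqrt ht0
  have hkey : b * Real.sqrt t ≤ b ^ 2 / 3 + (3/4) * t := by
    nlinarith [sq_nonneg (2 * b - 3 * Real.sqrt t), hsq]
  have hd : b / (2 * Real.sqrt t) ≤ b / 2 :=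
    div_le_div_of_nonneg_left hb (by norm_num) (by linarith)
  have hexp1 : Real.exp (b * Real.sqrt t) * Real.exp (-t)
      ≤ Real.exp (b ^ 2 / 3) * Real.exp (-(1/4) * t) := by
    rw [← Real.exp_add, ← Real.exp_add]
    exact Real.exp_le_exp.2 (by linarith)
  have h1 : b / (2 * Real.sqrt t) * Real.exp (b * Real.sqrt t) * Real.exp (-t)
      ≤ b / 2 * Real.exp (b ^ 2 / 3) * Real.exp (-(1/4) * t) := by
    calc b / (2 * Real.sqrt t) * Real.exp (b * Real.sqrt t) * Real.exp (-t)
        = b / (2 * Real.sqrt t) * (Real.exp (b * Real.sqrt t) * Real.exp (-t)) := by ring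
      _ ≤ b / 2 * (Real.exp (b ^ 2 / 3) * Real.exp (-(1/4) * t)) := by
          apply mul_le_mul hd hexp1 (by positivity) (div_nonneg hb (by norm_num))
      _ = b / 2 * Real.exp (b ^ 2 / 3) * Real.exp (-(1/4) * t) := by ring
  have h2' : a * Real.exp (a * t) * Real.exp (-t) = a * Real.exp (-(1 - a) * t) := by
    rw [mul_assoc, ← Real.exp_add, show a * t + -t = -(1 - a) * t by ring]
  calc (b / (2 * Real.sqrt t) * Real.exp (b * Real.sqrt t) + a * Real.exp (a * t)) * Real.exp (-t)
      = b / (2 * Real.sqrt t) * Real.exp (b * Real.sqrt t) * Real.exp (-t)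
        + a * Real.exp (a * t) * Real.exp (-t) := by ring
    _ ≤ _ := by rw [h2']; exact add_le_add_left h1 _

private lemma tail_integral (b a : ℝ) (ha1 : a < 1) :
    ∫ t in Ioi (1:ℝ),
        (b / 2 * Real.exp (b ^ 2 / 3) * Real.exp (-(1/4) * t) + a * Real.exp (-(1 - a) * t))
      = b / 2 * Real.exp (b ^ 2 / 3) * (4 * Real.exp (-(1/4)))
        + a / (1 - a) * Real.exp (-(1 - a)) := by
  have h1a : (0:ℝ) < 1 - a := by linarith
  have hne : (1 - a : ℝ) ≠ 0 := ne_of_gt h1a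
  set C1 : ℝ := b / 2 * Real.exp (b ^ 2 / 3) * (-4) with hC1
  set C2 : ℝ := a * (-(1 - a)⁻¹) with hC2
  have hderiv : ∀ x ∈ Ici (1:ℝ),
      HasDerivAt (fun t : ℝ => C1 * Real.exp (-(1/4) * t) + C2 * Real.exp (-(1 - a) * t))
        (b / 2 * Real.exp (b ^ 2 / 3) * Real.exp (-(1/4) * x) + a * Real.exp (-(1 - a) * x)) x := by
    intro x _
    have d1 : HasDerivAt (fun t : ℝ => Real.exp (-(1/4) * t))
        (Real.exp (-(1/4) * x) * (-(1/4))) x := by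
      have h : HasDerivAt (fun t : ℝ => -(1/4) * t) (-(1/4)) x := by
        simpa using (hasDerivAt_id x).const_mul (-(1/4) : ℝ)
      exact h.exp
    have d2 : HasDerivAt (fun t : ℝ => Real.exp (-(1 - a) * t))
        (Real.exp (-(1 - a) * x) * (-(1 - a))) x := by
      have h : HasDerivAt (fun t : ℝ => -(1 - a) * t) (-(1 - a)) x := by
        simpa using (hasDerivAt_id x).const_mul (-(1 - a) : ℝ)
      exact h.exp
    have := (d1.const_mul C1).add (d2.const_mul C2)
    refine this.congr_deriv ?_
    rw [hC1, hC2]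
    field_simp
  have hint : IntegrableOn
      (fun t : ℝ => b / 2 * Real.exp (b ^ 2 / 3) * Real.exp (-(1/4) * t)
        + a * Real.exp (-(1 - a) * t)) (Ioi 1) := by
    exact ((exp_neg_integrableOn_Ioi 1 (by norm_num : (0:ℝ) < 1/4)).const_mul _).add
      ((exp_neg_integrableOn_Ioi 1 h1a).const_mul _)
  have htend : Tendsto (fun t : ℝ => C1 * Real.exp (-(1/4) * t) + C2 * Real.exp (-(1 - a) * t))
      atTop (𝓝 0) := by
    have t1 : Tendsto (fun t : ℝ => Real.exp (-(1/4) * t)) atTop (𝓝 0) := by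
      have h : Tendsto (fun t : ℝ => (1/4 : ℝ) * t) atTop atTop :=
        tendsto_id.const_mul_atTop (by norm_num)
      have h2 := Real.tendsto_exp_neg_atTop_nhds_zero.comp h
      exact h2.congr fun t => by simp [Function.comp, neg_mul]
    have t2 : Tendsto (fun t : ℝ => Real.exp (-(1 - a) * t)) atTop (𝓝 0) := by
      have h : Tendsto (fun t : ℝ => (1 - a) * t) atTop atTop :=
        tendsto_id.const_mul_atTop h1a
      have h2 := Real.tendsto_exp_neg_atTop_nhds_zero.comp h
      exact h2.congr fun t => by simp only [Function.comp_apply]; congr 1; ring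
    have := (t1.const_mul C1).add (t2.const_mul C2)
    simpa using this
  have hres := integral_Ioi_of_hasDerivAt_of_tendsto' hderiv hint htend
  rw [hres, hC1, hC2]
  field_simp
  ring

private lemma num1 (b : ℝ) (hb : 0 ≤ b) :
    Real.exp b + b / 2 * Real.exp (b ^ 2 / 3) * (4 * Real.exp (-(1/4)))
      ≤ 2 * Real.exp 1 * Real.sqrt (2 * Real.pi) * Real.exp (b ^ 2 / 2) := by
  have hx1 : Real.exp b ≤ Real.exp (1/2) * Real.exp (b ^ 2 / 2) := by
    rw [← Real.exp_add]
    exact Real.exp_le_exp.2 (by nlinarith [sq_nonneg (b - 1)])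
  have hb6 : b ≤ 6 * Real.exp (b ^ 2 / 6) := by
    nlinarith [Real.add_one_le_exp (b ^ 2 / 6), sq_nonneg (b - 1)]
  have hsplit : Real.exp (b ^ 2 / 6) * Real.exp (b ^ 2 / 3) = Real.exp (b ^ 2 / 2) := by
    rw [← Real.exp_add]; congr 1; ring
  have hx2 : b / 2 * Real.exp (b ^ 2 / 3) * (4 * Real.exp (-(1/4)))
      ≤ 12 * Real.exp (-(1/4)) * Real.exp (b ^ 2 / 2) := by
    have h1 : b * Real.exp (b ^ 2 / 3) ≤ 6 * Real.exp (b ^ 2 / 6) * Real.exp (b ^ 2 / 3) :=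
      mul_le_mul_of_nonneg_right hb6 (Real.exp_pos _).le
    calc b / 2 * Real.exp (b ^ 2 / 3) * (4 * Real.exp (-(1/4)))
        = 2 * Real.exp (-(1/4)) * (b * Real.exp (b ^ 2 / 3)) := by ring
      _ ≤ 2 * Real.exp (-(1/4)) * (6 * Real.exp (b ^ 2 / 6) * Real.exp (b ^ 2 / 3)) :=
          mul_le_mul_of_nonneg_left h1 (by positivity)
      _ = 12 * Real.exp (-(1/4)) * Real.exp (b ^ 2 / 2) := by
          rw [mul_assoc (6:ℝ), hsplit]; ring
  have hhalf : Real.exp (1/2 : ℝ) ≤ 1.65 := by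
    have h1 : Real.exp (1/2 : ℝ) * Real.exp (1/2 : ℝ) = Real.exp 1 := by
      rw [← Real.exp_add]; norm_num
    nlinarith [Real.exp_one_lt_d9, Real.exp_pos (1/2 : ℝ),
      sq_nonneg (Real.exp (1/2 : ℝ) - 1.65)]
  have hq : Real.exp (-(1/4) : ℝ) ≤ 0.8 := by
    have h1 : (1.25 : ℝ) ≤ Real.exp (1/4) := by linarith [Real.add_one_le_exp (1/4 : ℝ)]
    rw [Real.exp_neg, show (0.8 : ℝ) = (1.25 : ℝ)⁻¹ by norm_num]
    exact inv_anti₀ (by norm_num) h1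
  have hsq25 : (2.5 : ℝ) ≤ Real.sqrt (2 * Real.pi) := by
    rw [show (2.5 : ℝ) = Real.sqrt 6.25 by
      rw [show (6.25 : ℝ) = 2.5 ^ 2 by norm_num, Real.sqrt_sq (by norm_num : (0:ℝ) ≤ 2.5)]]
    exact Real.sqrt_le_sqrt (by nlinarith [Real.pi_gt_d6])
  have he : (2.718 : ℝ) ≤ Real.exp 1 := by nlinarith [Real.exp_one_gt_d9]
  have hfin : Real.exp (1/2 : ℝ) + 12 * Real.exp (-(1/4))
      ≤ 2 * Real.exp 1 * Real.sqrt (2 * Real.pi) := by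
    nlinarith [hhalf, hq, hsq25, he]
  calc Real.exp b + b / 2 * Real.exp (b ^ 2 / 3) * (4 * Real.exp (-(1/4)))
      ≤ Real.exp (1/2) * Real.exp (b ^ 2 / 2) + 12 * Real.exp (-(1/4)) * Real.exp (b ^ 2 / 2) :=
        add_le_add hx1 hx2
    _ = (Real.exp (1/2) + 12 * Real.exp (-(1/4))) * Real.exp (b ^ 2 / 2) := by ring
    _ ≤ 2 * Real.exp 1 * Real.sqrt (2 * Real.pi) * Real.exp (b ^ 2 / 2) :=
        mul_le_mul_of_nonneg_right hfin (Real.exp_pos _).le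

private lemma num2 (a : ℝ) (ha : 0 ≤ a) (ha1 : a < 1) :
    Real.exp a + a / (1 - a) * Real.exp (-(1 - a)) ≤ Real.exp 1 / (1 - a) := by
  have h1a : (0:ℝ) < 1 - a := by linarith
  have hea : Real.exp a ≤ Real.exp 1 := Real.exp_le_exp.2 (by linarith)
  have heb : Real.exp (-(1 - a)) ≤ 1 := by
    calc Real.exp (-(1 - a)) ≤ Real.exp 0 := Real.exp_le_exp.2 (by linarith)
      _ = 1 := Real.exp_zero
  have he1 : (1:ℝ) ≤ Real.exp 1 := by linarith [Real.add_one_le_exp (1:ℝ)]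
  have key : Real.exp a * (1 - a) + a * Real.exp (-(1 - a)) ≤ Real.exp 1 := by
    nlinarith [mul_le_mul_of_nonneg_right hea h1a.le, mul_le_mul_of_nonneg_left heb ha]
  have heq : Real.exp a + a / (1 - a) * Real.exp (-(1 - a))
      = (Real.exp a * (1 - a) + a * Real.exp (-(1 - a))) / (1 - a) := by
    field_simp
  rw [heq, div_le_div_iff₀ h1a h1a]
  nlinarith [mul_le_mul_of_nonneg_right key h1a.le]

private lemma pointwise_key (τ₁ τ₂ c₂ v : ℝ) (hτ₁ : 0 ≤ τ₁) (hτ₂ : 0 ≤ τ₂) (hc₂ : 0 < c₂)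
    (hτ : 0 < τ₁ ∨ 0 < τ₂) :
    ENNReal.ofReal (Real.exp (2 * c₂ * v)) ≤
      ENNReal.ofReal (Real.exp (2 * c₂ * τ₁) + Real.exp (2 * c₂ * τ₂)) +
      ∫⁻ t in Ioi (1:ℝ) ∩ {t : ℝ | max (τ₁ * Real.sqrt t) (τ₂ * t) < v},
        ENNReal.ofReal (2 * c₂ * τ₁ / (2 * Real.sqrt t) * Real.exp (2 * c₂ * τ₁ * Real.sqrt t)
          + 2 * c₂ * τ₂ * Real.exp (2 * c₂ * τ₂ * t)) := by
  have hb0 : 0 ≤ 2 * c₂ * τ₁ := mul_nonneg (mul_nonneg (by norm_num) hc₂.le) hτ₁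
  have ha0 : 0 ≤ 2 * c₂ * τ₂ := mul_nonneg (mul_nonneg (by norm_num) hc₂.le) hτ₂
  have hexp : ∀ t : ℝ, v ≤ max (τ₁ * Real.sqrt t) (τ₂ * t) →
      Real.exp (2 * c₂ * v) ≤ Real.exp (2 * c₂ * τ₁ * Real.sqrt t)
        + Real.exp (2 * c₂ * τ₂ * t) := by
    intro t hvt
    rcases le_max_iff.1 hvt with h | h
    · have h' := mul_le_mul_of_nonneg_left h (by linarith : (0:ℝ) ≤ 2 * c₂)
      have h'' : 2 * c₂ * v ≤ 2 * c₂ * τ₁ * Real.sqrt t := by nlinarith [h']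
      calc Real.exp (2 * c₂ * v) ≤ Real.exp (2 * c₂ * τ₁ * Real.sqrt t) := Real.exp_le_exp.2 h''
        _ ≤ _ := le_add_of_nonneg_right (Real.exp_pos _).le
    · have h' := mul_le_mul_of_nonneg_left h (by linarith : (0:ℝ) ≤ 2 * c₂)
      have h'' : 2 * c₂ * v ≤ 2 * c₂ * τ₂ * t := by nlinarith [h']
      calc Real.exp (2 * c₂ * v) ≤ Real.exp (2 * c₂ * τ₂ * t) := Real.exp_le_exp.2 h''
        _ ≤ _ := le_add_of_nonneg_left (Real.exp_pos _).le
  rcases le_or_gt v (max τ₁ τ₂) with hv | hv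
  · refine le_trans ?_ le_self_add
    apply ENNReal.ofReal_le_ofReal
    have h1 := hexp 1 (by simpa [Real.sqrt_one] using hv)
    simpa [Real.sqrt_one, mul_one] using h1
  · have hvpos : 0 < v := lt_of_le_of_lt (le_trans hτ₁ (le_max_left _ _)) hv
    set S := {t : ℝ | 1 ≤ t ∧ v ≤ max (τ₁ * Real.sqrt t) (τ₂ * t)} with hS
    have hne : S.Nonempty := by
      rcases hτ with h | h
      · refine ⟨max 1 ((v / τ₁) ^ 2), le_max_left _ _, le_max_iff.2 (Or.inl ?_)⟩
        have h1 : Real.sqrt ((v / τ₁) ^ 2) ≤ Real.sqrt (max 1 ((v / τ₁) ^ 2)) :=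
          Real.sqrt_le_sqrt (le_max_right _ _)
        rw [Real.sqrt_sq (by positivity : (0:ℝ) ≤ v / τ₁)] at h1
        calc v = τ₁ * (v / τ₁) := by field_simp
          _ ≤ τ₁ * Real.sqrt (max 1 ((v / τ₁) ^ 2)) := mul_le_mul_of_nonneg_left h1 hτ₁
      · refine ⟨max 1 (v / τ₂), le_max_left _ _, le_max_iff.2 (Or.inr ?_)⟩
        calc v = τ₂ * (v / τ₂) := by field_simp
          _ ≤ τ₂ * max 1 (v / τ₂) := mul_le_mul_of_nonneg_left (le_max_right _ _) hτ₂
    have hbdd : BddBelow S := ⟨1, fun t ht => ht.1⟩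
    have hcontm : Continuous fun t : ℝ => max (τ₁ * Real.sqrt t) (τ₂ * t) :=
      (continuous_const.mul Real.continuous_sqrt).max (continuous_const.mul continuous_id)
    have hclosed : IsClosed S := by
      rw [hS, Set.setOf_and]
      exact (isClosed_le continuous_const continuous_id).inter
        (isClosed_le continuous_const hcontm)
    obtain ⟨ht1, hvt⟩ := hclosed.csInf_mem hne hbdd
    have ht1' : 1 < sInf S := by
      rcases ht1.lt_or_eq with h | h
      · exact h
      · exfalso
        rw [← h] at hvt
        simp only [Real.sqrt_one, mul_one] at hvt
        exact absurd hvt (not_le.2 hv)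
    have hmono : ∀ s t : ℝ, 1 ≤ s → s ≤ t →
        max (τ₁ * Real.sqrt s) (τ₂ * s) ≤ max (τ₁ * Real.sqrt t) (τ₂ * t) := fun s t _ hst =>
      max_le_max (mul_le_mul_of_nonneg_left (Real.sqrt_le_sqrt hst) hτ₁)
        (mul_le_mul_of_nonneg_left hst hτ₂)
    have hset : Ioi (1:ℝ) ∩ {t : ℝ | max (τ₁ * Real.sqrt t) (τ₂ * t) < v} = Ioo 1 (sInf S) := by
      ext t
      simp only [Set.mem_inter_iff, Set.mem_Ioi, Set.mem_setOf_eq, Set.mem_Ioo]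
      constructor
      · rintro ⟨h1t, hlt⟩
        refine ⟨h1t, ?_⟩
        by_contra hcon
        push_neg at hcon
        linarith [hvt, hmono (sInf S) t ht1 hcon]
      · rintro ⟨h1t, hlt⟩
        refine ⟨h1t, ?_⟩
        by_contra hcon
        push_neg at hcon
        exact absurd (csInf_le hbdd ⟨h1t.le, hcon⟩) (not_le.2 hlt)
    have hic : Set.uIcc (1:ℝ) (sInf S) = Set.Icc 1 (sInf S) := Set.uIcc_of_le ht1
    have hdc : ContinuousOn (fun t : ℝ => 2 * c₂ * τ₁ / (2 * Real.sqrt t)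
        * Real.exp (2 * c₂ * τ₁ * Real.sqrt t)
        + 2 * c₂ * τ₂ * Real.exp (2 * c₂ * τ₂ * t)) (Set.Icc 1 (sInf S)) := by
      apply ContinuousOn.add
      · apply ContinuousOn.mul
        · apply ContinuousOn.div continuousOn_const
            (continuous_const.mul Real.continuous_sqrt).continuousOn
          intro t ht
          have hpos : 0 < Real.sqrt t := Real.sqrt_pos.2 (by linarith [ht.1])
          exact ne_of_gt (show (0:ℝ) < 2 * Real.sqrt t by linarith)
        · exact (Real.continuous_exp.comp (continuous_const.mul Real.continuous_sqrt)).continuousOn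
      · exact (continuous_const.mul
          (Real.continuous_exp.comp (continuous_const.mul continuous_id))).continuousOn
    have hftc : ∫ t in (1:ℝ)..(sInf S),
        (2 * c₂ * τ₁ / (2 * Real.sqrt t) * Real.exp (2 * c₂ * τ₁ * Real.sqrt t)
          + 2 * c₂ * τ₂ * Real.exp (2 * c₂ * τ₂ * t))
        = (Real.exp (2 * c₂ * τ₁ * Real.sqrt (sInf S)) + Real.exp (2 * c₂ * τ₂ * sInf S))
          - (Real.exp (2 * c₂ * τ₁ * Real.sqrt 1) + Real.exp (2 * c₂ * τ₂ * 1)) := by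
      apply intervalIntegral.integral_eq_sub_of_hasDerivAt
        (f := fun s => Real.exp (2 * c₂ * τ₁ * Real.sqrt s) + Real.exp (2 * c₂ * τ₂ * s))
      · intro t ht
        rw [hic] at ht
        exact psi_hasDerivAt (2 * c₂ * τ₁) (2 * c₂ * τ₂) t (by linarith [ht.1])
      · apply ContinuousOn.intervalIntegrable
        rw [hic]
        exact hdc
    have hInt : IntegrableOn (fun t : ℝ => 2 * c₂ * τ₁ / (2 * Real.sqrt t)
        * Real.exp (2 * c₂ * τ₁ * Real.sqrt t)
        + 2 * c₂ * τ₂ * Real.exp (2 * c₂ * τ₂ * t)) (Set.Ioc 1 (sInf S)) :=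
      (hdc.integrableOn_Icc).mono_set Set.Ioc_subset_Icc_self
    calc ENNReal.ofReal (Real.exp (2 * c₂ * v))
        ≤ ENNReal.ofReal (Real.exp (2 * c₂ * τ₁ * Real.sqrt (sInf S))
            + Real.exp (2 * c₂ * τ₂ * sInf S)) := ENNReal.ofReal_le_ofReal (hexp _ hvt)
      _ = ENNReal.ofReal ((Real.exp (2 * c₂ * τ₁ * Real.sqrt 1) + Real.exp (2 * c₂ * τ₂ * 1))
            + ∫ t in (1:ℝ)..(sInf S),
              (2 * c₂ * τ₁ / (2 * Real.sqrt t) * Real.exp (2 * c₂ * τ₁ * Real.sqrt t)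
                + 2 * c₂ * τ₂ * Real.exp (2 * c₂ * τ₂ * t))) := by
          rw [hftc]; ring_nf
      _ ≤ ENNReal.ofReal (Real.exp (2 * c₂ * τ₁ * Real.sqrt 1) + Real.exp (2 * c₂ * τ₂ * 1))
            + ENNReal.ofReal (∫ t in (1:ℝ)..(sInf S),
              (2 * c₂ * τ₁ / (2 * Real.sqrt t) * Real.exp (2 * c₂ * τ₁ * Real.sqrt t)
                + 2 * c₂ * τ₂ * Real.exp (2 * c₂ * τ₂ * t))) := ENNReal.ofReal_add_le
      _ = _ := by
          congr 1
          · simp [Real.sqrt_one]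
          · rw [intervalIntegral.integral_of_le ht1'.le,
              MeasureTheory.ofReal_integral_eq_lintegral_ofReal hInt
                (ae_of_all _ fun t => psid_nonneg (2 * c₂ * τ₁) (2 * c₂ * τ₂) t hb0 ha0),
              hset]
            exact (setLIntegral_congr Ioo_ae_eq_Ioc).symm

/-- **Lemma 4.8.** If for all `t ≥ 1`, with probability at least `1 - e^{-t}`,
`|ξ| ≤ τ₁√t ∨ τ₂ t`, and `ℓ` satisfies Assumption 3.1 with `2c₂τ₂ < 1`, then
`E ℓ²(ξ) ≤ 2e√(2π) c₁² e^{2c₂²τ₁²} + e c₁²/(1 - 2c₂τ₂)`. -/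
theorem stmt12 (Ω : Type) [MeasurableSpace Ω] (μ : Measure Ω) [IsProbabilityMeasure μ]
    (ξ : Ω → ℝ) (hξ : Measurable ξ) (τ₁ τ₂ : ℝ) (hτ₁ : 0 ≤ τ₁) (hτ₂ : 0 ≤ τ₂)
    (hconc : ∀ t : ℝ, 1 ≤ t →
      1 - Real.exp (-t) ≤ (μ {ω | |ξ ω| ≤ max (τ₁ * Real.sqrt t) (τ₂ * t)}).toReal)
    (loss : ℝ → ℝ) (c₁ c₂ : ℝ) (hloss : IsLoss loss c₁ c₂) (h2 : 2 * c₂ * τ₂ < 1) :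
    ∫ ω, loss (ξ ω) ^ 2 ∂μ ≤
      2 * Real.exp 1 * Real.sqrt (2 * Real.pi) * c₁ ^ 2 * Real.exp (2 * c₂ ^ 2 * τ₁ ^ 2) +
        Real.exp 1 * c₁ ^ 2 / (1 - 2 * c₂ * τ₂) := by
  obtain ⟨hc₁, hc₂, hnn, hz, hev, hmono, hconv, hbd⟩ := hloss
  have h1a : (0:ℝ) < 1 - 2 * c₂ * τ₂ := by linarith
  have hb0 : 0 ≤ 2 * c₂ * τ₁ := mul_nonneg (mul_nonneg (by norm_num) hc₂.le) hτ₁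
  have ha0 : 0 ≤ 2 * c₂ * τ₂ := mul_nonneg (mul_nonneg (by norm_num) hc₂.le) hτ₂
  have hRHS0 : 0 ≤ 2 * Real.exp 1 * Real.sqrt (2 * Real.pi) * c₁ ^ 2
      * Real.exp (2 * c₂ ^ 2 * τ₁ ^ 2) + Real.exp 1 * c₁ ^ 2 / (1 - 2 * c₂ * τ₂) := by
    have hx : 0 ≤ 2 * Real.exp 1 * Real.sqrt (2 * Real.pi) * c₁ ^ 2
        * Real.exp (2 * c₂ ^ 2 * τ₁ ^ 2) := by positivity
    have hy : 0 ≤ Real.exp 1 * c₁ ^ 2 / (1 - 2 * c₂ * τ₂) :=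
      div_nonneg (by positivity) h1a.le
    linarith
  -- measurability of the loss
  have hlossmeas : Measurable loss := by
    have hF : Monotone fun y : ℝ => loss (max y 0) := fun y₁ y₂ h =>
      hmono (Set.mem_Ici.2 (le_max_right _ _)) (Set.mem_Ici.2 (le_max_right _ _))
        (max_le_max h le_rfl)
    have heq : loss = fun x => loss (max |x| 0) := by
      funext x
      rcases le_or_gt 0 x with h | h
      · rw [max_eq_left (abs_nonneg x), abs_of_nonneg h]
      · rw [max_eq_left (abs_nonneg x), abs_of_neg h, hev]
    rw [heq]
    exact hF.measurable.comp continuous_abs.measurable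
  have hmeas2 : Measurable fun ω => loss (ξ ω) ^ 2 := (hlossmeas.comp hξ).pow_const 2
  -- pointwise bound on the squared loss
  have hA : ∀ x : ℝ, loss x ^ 2 ≤ c₁ ^ 2 * Real.exp (2 * c₂ * |x|) := by
    intro x
    have hx : loss x = loss |x| := by
      rcases le_or_gt 0 x with h | h
      · rw [abs_of_nonneg h]
      · rw [abs_of_neg h, hev]
    have h1 : loss |x| ≤ c₁ * Real.exp (c₂ * |x|) := hbd _ (abs_nonneg x)
    have h0 : 0 ≤ loss |x| := hnn _
    have harg : c₂ * |x| + c₂ * |x| = 2 * c₂ * |x| := by ring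
    calc loss x ^ 2 = loss |x| ^ 2 := by rw [hx]
      _ ≤ (c₁ * Real.exp (c₂ * |x|)) ^ 2 := pow_le_pow_left₀ h0 h1 2
      _ = c₁ ^ 2 * Real.exp (2 * c₂ * |x|) := by
          rw [mul_pow, sq (Real.exp (c₂ * |x|)), ← Real.exp_add, harg]
  rw [MeasureTheory.integral_eq_lintegral_of_nonneg_ae
    (ae_of_all μ fun ω => sq_nonneg (loss (ξ ω))) hmeas2.aestronglyMeasurable]
  apply ENNReal.toReal_le_of_le_ofReal hRHS0
  by_cases hτ0 : τ₁ = 0 ∧ τ₂ = 0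
  · -- degenerate case: ξ = 0 a.e.
    obtain ⟨e1, e2⟩ := hτ0
    subst e1
    subst e2
    have htail0 : ∀ t : ℝ, 1 ≤ t → (μ {ω | ¬ |ξ ω| ≤ 0}).toReal ≤ Real.exp (-t) := by
      intro t ht
      have h := hconc t ht
      simp only [zero_mul, max_self] at h
      have hS : MeasurableSet {ω | |ξ ω| ≤ (0:ℝ)} := hξ.abs measurableSet_Iic
      have hcompl : {ω | ¬ |ξ ω| ≤ (0:ℝ)} = {ω | |ξ ω| ≤ (0:ℝ)}ᶜ := rfl
      rw [hcompl, prob_compl_eq_one_sub hS,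
        ENNReal.toReal_sub_of_le prob_le_one ENNReal.one_ne_top, ENNReal.toReal_one]
      linarith
    have hzero : μ {ω | ¬ |ξ ω| ≤ (0:ℝ)} = 0 := by
      have hto : (μ {ω | ¬ |ξ ω| ≤ (0:ℝ)}).toReal ≤ 0 :=
        ge_of_tendsto Real.tendsto_exp_neg_atTop_nhds_zero
          ((eventually_ge_atTop (1:ℝ)).mono fun t ht => htail0 t ht)
      have h0 : (μ {ω | ¬ |ξ ω| ≤ (0:ℝ)}).toReal = 0 :=
        le_antisymm hto ENNReal.toReal_nonneg
      exact ((ENNReal.toReal_eq_zero_iff _).1 h0).resolve_right (measure_ne_top μ _)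
    have hae : ∀ᵐ ω ∂μ, |ξ ω| ≤ (0:ℝ) := ae_iff.2 hzero
    have hae2 : (fun ω => ENNReal.ofReal (loss (ξ ω) ^ 2)) =ᵐ[μ] fun _ => 0 := by
      filter_upwards [hae] with ω hω
      have hx : ξ ω = 0 := abs_nonpos_iff.1 hω
      simp [hx, hz]
    rw [lintegral_congr_ae hae2, lintegral_zero]
    exact zero_le
  · -- main case
    have hτ : 0 < τ₁ ∨ 0 < τ₂ := by
      by_contra hcon
      push_neg at hcon
      exact hτ0 ⟨le_antisymm hcon.1 hτ₁, le_antisymm hcon.2 hτ₂⟩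
    have hcontm : Continuous fun t : ℝ => max (τ₁ * Real.sqrt t) (τ₂ * t) :=
      (continuous_const.mul Real.continuous_sqrt).max (continuous_const.mul continuous_id)
    have htail : ∀ t : ℝ, 1 ≤ t →
        μ {ω | max (τ₁ * Real.sqrt t) (τ₂ * t) < |ξ ω|} ≤ ENNReal.ofReal (Real.exp (-t)) := by
      intro t ht
      have h := hconc t ht
      have hS : MeasurableSet {ω | |ξ ω| ≤ max (τ₁ * Real.sqrt t) (τ₂ * t)} :=
        hξ.abs measurableSet_Iic
      have hcompl : {ω | max (τ₁ * Real.sqrt t) (τ₂ * t) < |ξ ω|}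
          = {ω | |ξ ω| ≤ max (τ₁ * Real.sqrt t) (τ₂ * t)}ᶜ := by
        ext ω; simp [not_le]
      rw [hcompl, prob_compl_eq_one_sub hS, tsub_le_iff_right]
      calc (1:ℝ≥0∞) = ENNReal.ofReal 1 := by simp
        _ ≤ ENNReal.ofReal (Real.exp (-t)
            + (μ {ω | |ξ ω| ≤ max (τ₁ * Real.sqrt t) (τ₂ * t)}).toReal) :=
          ENNReal.ofReal_le_ofReal (by linarith)
        _ = ENNReal.ofReal (Real.exp (-t))
            + ENNReal.ofReal ((μ {ω | |ξ ω| ≤ max (τ₁ * Real.sqrt t) (τ₂ * t)}).toReal) :=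
          ENNReal.ofReal_add (Real.exp_pos _).le ENNReal.toReal_nonneg
        _ = _ := by rw [ENNReal.ofReal_toReal (measure_ne_top μ _)]
    have hψdnn : ∀ t : ℝ, 0 ≤ 2 * c₂ * τ₁ / (2 * Real.sqrt t)
        * Real.exp (2 * c₂ * τ₁ * Real.sqrt t) + 2 * c₂ * τ₂ * Real.exp (2 * c₂ * τ₂ * t) :=
      fun t => psid_nonneg _ _ t hb0 ha0
    have hψdENNmeas : Measurable fun t : ℝ => ENNReal.ofReal (2 * c₂ * τ₁ / (2 * Real.sqrt t)
        * Real.exp (2 * c₂ * τ₁ * Real.sqrt t) + 2 * c₂ * τ₂ * Real.exp (2 * c₂ * τ₂ * t)) := by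
      apply ENNReal.measurable_ofReal.comp
      apply Measurable.add
      · exact (measurable_const.div
          (continuous_const.mul Real.continuous_sqrt).measurable).mul
          (Real.continuous_exp.comp (continuous_const.mul Real.continuous_sqrt)).measurable
      · exact (continuous_const.mul
          (Real.continuous_exp.comp (continuous_const.mul continuous_id))).measurable
    have hAmeas : ∀ v : ℝ, MeasurableSet {t : ℝ | max (τ₁ * Real.sqrt t) (τ₂ * t) < v} :=
      fun v => measurableSet_lt hcontm.measurable measurable_const
    have hswap : ∫⁻ ω, (∫⁻ t in Ioi (1:ℝ) ∩ {t : ℝ | max (τ₁ * Real.sqrt t) (τ₂ * t) < |ξ ω|},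
        ENNReal.ofReal (2 * c₂ * τ₁ / (2 * Real.sqrt t) * Real.exp (2 * c₂ * τ₁ * Real.sqrt t)
          + 2 * c₂ * τ₂ * Real.exp (2 * c₂ * τ₂ * t))) ∂μ
        ≤ ENNReal.ofReal (2 * c₂ * τ₁ / 2 * Real.exp ((2 * c₂ * τ₁) ^ 2 / 3)
            * (4 * Real.exp (-(1/4)))
          + 2 * c₂ * τ₂ / (1 - 2 * c₂ * τ₂) * Real.exp (-(1 - 2 * c₂ * τ₂))) := by
      have hrw : ∀ ω, (∫⁻ t in Ioi (1:ℝ) ∩ {t : ℝ | max (τ₁ * Real.sqrt t) (τ₂ * t) < |ξ ω|},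
          ENNReal.ofReal (2 * c₂ * τ₁ / (2 * Real.sqrt t) * Real.exp (2 * c₂ * τ₁ * Real.sqrt t)
            + 2 * c₂ * τ₂ * Real.exp (2 * c₂ * τ₂ * t)))
          = ∫⁻ t in Ioi (1:ℝ), Set.indicator {t : ℝ | max (τ₁ * Real.sqrt t) (τ₂ * t) < |ξ ω|}
              (fun t => ENNReal.ofReal (2 * c₂ * τ₁ / (2 * Real.sqrt t)
                * Real.exp (2 * c₂ * τ₁ * Real.sqrt t)
                + 2 * c₂ * τ₂ * Real.exp (2 * c₂ * τ₂ * t))) t := by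
        intro ω
        rw [lintegral_indicator (hAmeas _), Measure.restrict_restrict (hAmeas _), Set.inter_comm]
      have humeas : Measurable (Function.uncurry fun (ω : Ω) (t : ℝ) =>
          Set.indicator {t' : ℝ | max (τ₁ * Real.sqrt t') (τ₂ * t') < |ξ ω|}
            (fun t' => ENNReal.ofReal (2 * c₂ * τ₁ / (2 * Real.sqrt t')
              * Real.exp (2 * c₂ * τ₁ * Real.sqrt t')
              + 2 * c₂ * τ₂ * Real.exp (2 * c₂ * τ₂ * t'))) t) := by
        have heq2 : (Function.uncurry fun (ω : Ω) (t : ℝ) =>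
            Set.indicator {t' : ℝ | max (τ₁ * Real.sqrt t') (τ₂ * t') < |ξ ω|}
              (fun t' => ENNReal.ofReal (2 * c₂ * τ₁ / (2 * Real.sqrt t')
                * Real.exp (2 * c₂ * τ₁ * Real.sqrt t')
                + 2 * c₂ * τ₂ * Real.exp (2 * c₂ * τ₂ * t'))) t)
            = fun p : Ω × ℝ =>
              Set.indicator {p : Ω × ℝ | max (τ₁ * Real.sqrt p.2) (τ₂ * p.2) < |ξ p.1|}
                (fun q => ENNReal.ofReal (2 * c₂ * τ₁ / (2 * Real.sqrt q.2)
                  * Real.exp (2 * c₂ * τ₁ * Real.sqrt q.2)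
                  + 2 * c₂ * τ₂ * Real.exp (2 * c₂ * τ₂ * q.2))) p := by
          funext p
          simp only [Function.uncurry, Set.indicator_apply, Set.mem_setOf_eq]
        rw [heq2]
        exact (hψdENNmeas.comp measurable_snd).indicator
          (measurableSet_lt (hcontm.measurable.comp measurable_snd)
            ((hξ.comp measurable_fst).abs))
      calc ∫⁻ ω, (∫⁻ t in Ioi (1:ℝ) ∩ {t : ℝ | max (τ₁ * Real.sqrt t) (τ₂ * t) < |ξ ω|},
            ENNReal.ofReal (2 * c₂ * τ₁ / (2 * Real.sqrt t)
              * Real.exp (2 * c₂ * τ₁ * Real.sqrt t)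
              + 2 * c₂ * τ₂ * Real.exp (2 * c₂ * τ₂ * t))) ∂μ
          = ∫⁻ ω, (∫⁻ t in Ioi (1:ℝ),
              Set.indicator {t : ℝ | max (τ₁ * Real.sqrt t) (τ₂ * t) < |ξ ω|}
                (fun t => ENNReal.ofReal (2 * c₂ * τ₁ / (2 * Real.sqrt t)
                  * Real.exp (2 * c₂ * τ₁ * Real.sqrt t)
                  + 2 * c₂ * τ₂ * Real.exp (2 * c₂ * τ₂ * t))) t) ∂μ := lintegral_congr hrw
        _ = ∫⁻ t in Ioi (1:ℝ), (∫⁻ ω,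
              Set.indicator {t' : ℝ | max (τ₁ * Real.sqrt t') (τ₂ * t') < |ξ ω|}
                (fun t' => ENNReal.ofReal (2 * c₂ * τ₁ / (2 * Real.sqrt t')
                  * Real.exp (2 * c₂ * τ₁ * Real.sqrt t')
                  + 2 * c₂ * τ₂ * Real.exp (2 * c₂ * τ₂ * t'))) t ∂μ) := by
            exact lintegral_lintegral_swap humeas.aemeasurable
        _ ≤ ∫⁻ t in Ioi (1:ℝ), ENNReal.ofReal (2 * c₂ * τ₁ / 2
              * Real.exp ((2 * c₂ * τ₁) ^ 2 / 3) * Real.exp (-(1/4) * t)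
              + 2 * c₂ * τ₂ * Real.exp (-(1 - 2 * c₂ * τ₂) * t)) := by
            apply setLIntegral_mono' measurableSet_Ioi
            intro t ht
            have heq3 : (fun ω => Set.indicator
                {t' : ℝ | max (τ₁ * Real.sqrt t') (τ₂ * t') < |ξ ω|}
                (fun t' => ENNReal.ofReal (2 * c₂ * τ₁ / (2 * Real.sqrt t')
                  * Real.exp (2 * c₂ * τ₁ * Real.sqrt t')
                  + 2 * c₂ * τ₂ * Real.exp (2 * c₂ * τ₂ * t'))) t)
                = fun ω => Set.indicator {ω' : Ω | max (τ₁ * Real.sqrt t) (τ₂ * t) < |ξ ω'|}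
                  (fun _ => ENNReal.ofReal (2 * c₂ * τ₁ / (2 * Real.sqrt t)
                    * Real.exp (2 * c₂ * τ₁ * Real.sqrt t)
                    + 2 * c₂ * τ₂ * Real.exp (2 * c₂ * τ₂ * t))) ω := by
              funext ω
              simp only [Set.indicator_apply, Set.mem_setOf_eq]
            rw [heq3, lintegral_indicator_const (measurableSet_lt measurable_const hξ.abs)]
            have hIoi : (1:ℝ) < t := ht
            calc ENNReal.ofReal (2 * c₂ * τ₁ / (2 * Real.sqrt t)
                  * Real.exp (2 * c₂ * τ₁ * Real.sqrt t)
                  + 2 * c₂ * τ₂ * Real.exp (2 * c₂ * τ₂ * t))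
                  * μ {ω | max (τ₁ * Real.sqrt t) (τ₂ * t) < |ξ ω|}
                ≤ ENNReal.ofReal (2 * c₂ * τ₁ / (2 * Real.sqrt t)
                    * Real.exp (2 * c₂ * τ₁ * Real.sqrt t)
                    + 2 * c₂ * τ₂ * Real.exp (2 * c₂ * τ₂ * t))
                  * ENNReal.ofReal (Real.exp (-t)) :=
                  mul_le_mul_right (htail t hIoi.le) _
              _ = ENNReal.ofReal ((2 * c₂ * τ₁ / (2 * Real.sqrt t)
                    * Real.exp (2 * c₂ * τ₁ * Real.sqrt t)
                    + 2 * c₂ * τ₂ * Real.exp (2 * c₂ * τ₂ * t)) * Real.exp (-t)) :=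
                  (ENNReal.ofReal_mul (hψdnn t)).symm
              _ ≤ _ := ENNReal.ofReal_le_ofReal
                  (psid_mul_exp_le (2 * c₂ * τ₁) (2 * c₂ * τ₂) t hb0 ha0 hIoi)
        _ = ENNReal.ofReal (∫ t in Ioi (1:ℝ), (2 * c₂ * τ₁ / 2
              * Real.exp ((2 * c₂ * τ₁) ^ 2 / 3) * Real.exp (-(1/4) * t)
              + 2 * c₂ * τ₂ * Real.exp (-(1 - 2 * c₂ * τ₂) * t))) := by
            refine (MeasureTheory.ofReal_integral_eq_lintegral_ofReal ?_ ?_).symm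
            · exact ((exp_neg_integrableOn_Ioi 1 (by norm_num : (0:ℝ) < 1/4)).const_mul _).add
                ((exp_neg_integrableOn_Ioi 1 h1a).const_mul _)
            · refine ae_of_all _ fun t => add_nonneg ?_ ?_
              · exact mul_nonneg (mul_nonneg (div_nonneg hb0 (by norm_num))
                  (Real.exp_pos _).le) (Real.exp_pos _).le
              · exact mul_nonneg ha0 (Real.exp_pos _).le
        _ = _ := by rw [tail_integral (2 * c₂ * τ₁) (2 * c₂ * τ₂) h2]
    have hmain : ∫⁻ ω, ENNReal.ofReal (Real.exp (2 * c₂ * |ξ ω|)) ∂μ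
        ≤ ENNReal.ofReal (Real.exp (2 * c₂ * τ₁) + Real.exp (2 * c₂ * τ₂))
          + ENNReal.ofReal (2 * c₂ * τ₁ / 2 * Real.exp ((2 * c₂ * τ₁) ^ 2 / 3)
              * (4 * Real.exp (-(1/4)))
            + 2 * c₂ * τ₂ / (1 - 2 * c₂ * τ₂) * Real.exp (-(1 - 2 * c₂ * τ₂))) := by
      calc ∫⁻ ω, ENNReal.ofReal (Real.exp (2 * c₂ * |ξ ω|)) ∂μ
          ≤ ∫⁻ ω, (ENNReal.ofReal (Real.exp (2 * c₂ * τ₁) + Real.exp (2 * c₂ * τ₂))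
              + ∫⁻ t in Ioi (1:ℝ) ∩ {t : ℝ | max (τ₁ * Real.sqrt t) (τ₂ * t) < |ξ ω|},
                ENNReal.ofReal (2 * c₂ * τ₁ / (2 * Real.sqrt t)
                  * Real.exp (2 * c₂ * τ₁ * Real.sqrt t)
                  + 2 * c₂ * τ₂ * Real.exp (2 * c₂ * τ₂ * t))) ∂μ :=
            lintegral_mono fun ω => pointwise_key τ₁ τ₂ c₂ (|ξ ω|) hτ₁ hτ₂ hc₂ hτ
        _ = ENNReal.ofReal (Real.exp (2 * c₂ * τ₁) + Real.exp (2 * c₂ * τ₂))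
            + ∫⁻ ω, (∫⁻ t in Ioi (1:ℝ) ∩ {t : ℝ | max (τ₁ * Real.sqrt t) (τ₂ * t) < |ξ ω|},
                ENNReal.ofReal (2 * c₂ * τ₁ / (2 * Real.sqrt t)
                  * Real.exp (2 * c₂ * τ₁ * Real.sqrt t)
                  + 2 * c₂ * τ₂ * Real.exp (2 * c₂ * τ₂ * t))) ∂μ := by
            rw [lintegral_add_left measurable_const, lintegral_const, measure_univ, mul_one]
        _ ≤ _ := add_le_add_right hswap _
    calc ∫⁻ ω, ENNReal.ofReal (loss (ξ ω) ^ 2) ∂μ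
        ≤ ∫⁻ ω, ENNReal.ofReal (c₁ ^ 2 * Real.exp (2 * c₂ * |ξ ω|)) ∂μ :=
          lintegral_mono fun ω => ENNReal.ofReal_le_ofReal (hA _)
      _ = ENNReal.ofReal (c₁ ^ 2) * ∫⁻ ω, ENNReal.ofReal (Real.exp (2 * c₂ * |ξ ω|)) ∂μ := by
          simp_rw [ENNReal.ofReal_mul (sq_nonneg c₁)]
          exact lintegral_const_mul' _ _ ENNReal.ofReal_ne_top
      _ ≤ ENNReal.ofReal (c₁ ^ 2)
          * (ENNReal.ofReal (Real.exp (2 * c₂ * τ₁) + Real.exp (2 * c₂ * τ₂))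
            + ENNReal.ofReal (2 * c₂ * τ₁ / 2 * Real.exp ((2 * c₂ * τ₁) ^ 2 / 3)
                * (4 * Real.exp (-(1/4)))
              + 2 * c₂ * τ₂ / (1 - 2 * c₂ * τ₂) * Real.exp (-(1 - 2 * c₂ * τ₂)))) :=
          mul_le_mul_right hmain _
      _ ≤ _ := by
          rw [← ENNReal.ofReal_add (by positivity) ?hD, ← ENNReal.ofReal_mul (sq_nonneg c₁)]
          case hD =>
            refine add_nonneg ?_ ?_
            · exact mul_nonneg (mul_nonneg (div_nonneg hb0 (by norm_num))
                (Real.exp_pos _).le) (by positivity)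
            · exact mul_nonneg (div_nonneg ha0 h1a.le) (Real.exp_pos _).le
          apply ENNReal.ofReal_le_ofReal
          have hb2 : 2 * c₂ ^ 2 * τ₁ ^ 2 = (2 * c₂ * τ₁) ^ 2 / 2 := by ring
          rw [hb2]
          have hn1 := num1 (2 * c₂ * τ₁) hb0
          have hn2 := num2 (2 * c₂ * τ₂) ha0 h2
          calc c₁ ^ 2 * ((Real.exp (2 * c₂ * τ₁) + Real.exp (2 * c₂ * τ₂))
                + (2 * c₂ * τ₁ / 2 * Real.exp ((2 * c₂ * τ₁) ^ 2 / 3) * (4 * Real.exp (-(1/4)))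
                  + 2 * c₂ * τ₂ / (1 - 2 * c₂ * τ₂) * Real.exp (-(1 - 2 * c₂ * τ₂))))
              = c₁ ^ 2 * ((Real.exp (2 * c₂ * τ₁)
                  + 2 * c₂ * τ₁ / 2 * Real.exp ((2 * c₂ * τ₁) ^ 2 / 3)
                    * (4 * Real.exp (-(1/4))))
                + (Real.exp (2 * c₂ * τ₂)
                  + 2 * c₂ * τ₂ / (1 - 2 * c₂ * τ₂) * Real.exp (-(1 - 2 * c₂ * τ₂)))) := by
                ring
            _ ≤ c₁ ^ 2 * (2 * Real.exp 1 * Real.sqrt (2 * Real.pi)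
                  * Real.exp ((2 * c₂ * τ₁) ^ 2 / 2) + Real.exp 1 / (1 - 2 * c₂ * τ₂)) := by
                have := add_le_add hn1 hn2
                nlinarith [sq_nonneg c₁, this]
            _ = 2 * Real.exp 1 * Real.sqrt (2 * Real.pi) * c₁ ^ 2
                  * Real.exp ((2 * c₂ * τ₁) ^ 2 / 2)
                + Real.exp 1 * c₁ ^ 2 / (1 - 2 * c₂ * τ₂) := by ring

end KLN
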